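/- For all points a, b, c ∈ ℝ² and every point e on the segment from a to c (e ∈ [a, c]), the diametral disk D(b,e) is contained in D(a,b) ∪ D(b,c). -/
import Mathlib


open scoped RealInnerProductSpace

noncomputable section

/-- The Euclidean plane. -/
abbrev Pt := EuclideanSpace ℝ (Fin 2)

/-- The closed disk with diameter `ab`. -/
def diskD (a b : Pt) : Set Pt := Metric.closedBall (midpoint ℝ a b) (dist a b / 2)

/-- `a` and `b` are adjacent in the witness Gabriel graph with witness set `W`. -/
def gabrielEdge (W : Set Pt) (a b : Pt) : Prop := (diskD a b \ {a, b}) ∩ W = ∅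

/-- General position: no three points collinear, no four points concyclic. -/
def GenPos (S : Set Pt) : Prop :=
  (∀ a ∈ S, ∀ b ∈ S, ∀ c ∈ S, a ≠ b → a ≠ c → b ≠ c → ¬ Collinear ℝ ({a, b, c} : Set Pt)) ∧
  (∀ a ∈ S, ∀ b ∈ S, ∀ c ∈ S, ∀ d ∈ S, a ≠ b → a ≠ c → a ≠ d → b ≠ c → b ≠ d → c ≠ d →
    ¬ EuclideanGeometry.Cospherical ({a, b, c, d} : Set Pt))

/-- Planar determinant `u₁v₂ − u₂v₁`. -/
def det2 (u v : Pt) : ℝ := u 0 * v 1 - u 1 * v 0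

/-- Counterclockwise convex position. -/
def CCWConvexPos {m : ℕ} (q : Fin m → Pt) : Prop :=
  ∀ i j k : Fin m, i < j → j < k → 0 < det2 (q j - q i) (q k - q i)

/-- Cyclic successor in `Fin m`. -/
def cyclicSucc {m : ℕ} (hm : 0 < m) (i : Fin m) : Fin m :=
  ⟨((i : ℕ) + 1) % m, Nat.mod_lt _ hm⟩


lemma mem_diskD_iff (a b x : Pt) : x ∈ diskD a b ↔ ⟪x - a, x - b⟫ ≤ 0 := by
  have key : ⟪x - a, x - b⟫ = (dist x (midpoint ℝ a b) * 2) ^ 2 / 4 - (dist a b) ^ 2 / 4 := by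
    have h1 : (x - a) + (x - b) = (2:ℝ) • (x - midpoint ℝ a b) := by
      rw [midpoint_eq_smul_add,
        show ((⅟2 : ℝ) : ℝ) • (a + b) = (2:ℝ)⁻¹ • (a + b) by norm_num]
      module
    have h2 : (x - a) - (x - b) = -(a - b) := by abel
    have e1 := norm_add_sq_real (x - a) (x - b)
    have e2 := norm_sub_sq_real (x - a) (x - b)
    rw [h1] at e1; rw [h2] at e2
    rw [norm_smul] at e1; rw [norm_neg] at e2
    simp only [Real.norm_ofNat] at e1
    rw [dist_eq_norm, dist_eq_norm]
    nlinarith [e1, e2]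
  rw [diskD, Metric.mem_closedBall, key, sub_nonpos]
  constructor
  · intro h
    nlinarith [dist_nonneg (x := x) (y := midpoint ℝ a b), dist_nonneg (x := a) (y := b)]
  · intro h
    nlinarith [dist_nonneg (x := x) (y := midpoint ℝ a b), dist_nonneg (x := a) (y := b)]

/-- For `e` on segment `[a,c]`, the disk `D(b,e)` is contained in
`D(a,b) ∪ D(b,c)`. -/
theorem disk_on_segment_subset_union
    (a b c e : Pt) (he : e ∈ segment ℝ a c) :
    diskD b e ⊆ diskD a b ∪ diskD b c := by
  intro x hx
  obtain ⟨t, s, ht, hs, hts, rfl⟩ := he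
  rw [mem_diskD_iff] at hx
  have hsplit : ⟪x - b, x - (t • a + s • c)⟫
      = t * ⟪x - b, x - a⟫ + s * ⟪x - b, x - c⟫ := by
    have : x - (t • a + s • c) = t • (x - a) + s • (x - c) := by
      rw [show (t:ℝ) • (x - a) + s • (x - c) = (t + s) • x - (t • a + s • c) by module, hts]
      module
    rw [this, inner_add_right, real_inner_smul_right, real_inner_smul_right]
  rw [hsplit] at hx
  by_cases hcase : ⟪x - b, x - a⟫ ≤ 0
  · left
    rw [mem_diskD_iff, real_inner_comm]
    exact hcase
  · right
    rw [mem_diskD_iff]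
    push_neg at hcase
    by_contra hB
    push_neg at hB
    rcases eq_or_lt_of_le hs with hs0 | hs0
    · have ht1 : t = 1 := by linarith
      rw [← hs0, ht1] at hx
      simp only [one_mul, zero_mul, add_zero] at hx
      linarith
    · nlinarith [mul_pos hs0 hB, mul_nonneg ht hcase.le]
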